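/- Let ℋ be a complex Hilbert space and A ∈ B(ℋ) a self-adjoint operator with nonnegative spectrum. Let θ ∈ ℂ and w ∈ ℂ with w ≠ 0 and Re(e^{θ} w) ≥ 0. Then for every α ∈ [0, 1] and every φ ∈ ℋ, |⟨A^{(1−α)/2} φ, (w·1 + e^{−θ} A)⁻¹ A^{(1−α)/2} φ⟩| ≤ e^{2|Re θ|} |w|^{−α} ‖φ‖². -/

import Mathlib

open scoped InnerProductSpace

private lemma rpow_mul_rpow_le_max (t b α : ℝ) (ht : 0 ≤ t) (hb : 0 < b)
    (h0 : 0 ≤ α) (h1 : α ≤ 1) : t ^ (1 - α) * b ^ α ≤ max t b := by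
  rcases eq_or_lt_of_le ht with rfl | htpos
  · rcases eq_or_lt_of_le h1 with rfl | hlt
    · simpa [Real.rpow_zero, Real.rpow_one] using le_max_right (0:ℝ) b
    · rw [Real.zero_rpow (by linarith), zero_mul]
      exact le_max_of_le_right hb.le
  · set M := max t b with hM
    have hMpos : 0 < M := lt_max_of_lt_left htpos
    calc t ^ (1 - α) * b ^ α
        ≤ M ^ (1 - α) * M ^ α := by
          apply mul_le_mul (Real.rpow_le_rpow ht (le_max_left _ _) (by linarith))
            (Real.rpow_le_rpow hb.le (le_max_right _ _) h0)
            (Real.rpow_nonneg hb.le _) (Real.rpow_nonneg hMpos.le _)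
      _ = M := by rw [← Real.rpow_add hMpos]; norm_num

private lemma scalar_bound (θ w : ℂ) (hw : w ≠ 0) (hRe : 0 ≤ (Complex.exp θ * w).re)
    (α t : ℝ) (h0 : 0 ≤ α) (h1 : α ≤ 1) (ht : 0 ≤ t) :
    t ^ ((1 - α) / 2) * (‖w + Complex.exp (-θ) * t‖)⁻¹ * t ^ ((1 - α) / 2)
      ≤ Real.exp (2 * |θ.re|) * ‖w‖ ^ (-α) := by
  set r := θ.re with hr
  set z := Complex.exp θ * w with hz
  have hbw : 0 < ‖w‖ := norm_pos_iff.mpr hw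
  have hb : 0 < ‖z‖ := by
    rw [hz, norm_mul]
    exact mul_pos (norm_pos_iff.mpr (Complex.exp_ne_zero θ)) hbw
  have hfactor : w + Complex.exp (-θ) * t = Complex.exp (-θ) * (z + t) := by
    rw [hz, Complex.exp_neg, mul_add, ← mul_assoc,
      inv_mul_cancel₀ (Complex.exp_ne_zero θ), one_mul]
  have hd : ‖w + Complex.exp (-θ) * t‖
      = Real.exp (-r) * ‖z + t‖ := by
    rw [hfactor, norm_mul, Complex.norm_exp, Complex.neg_re, hr]
  have hzt : max t (‖z‖) ≤ ‖z + (t : ℂ)‖ := by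
    refine max_le ?_ ?_
    · calc t ≤ z.re + t := by linarith [hRe]
        _ = (z + (t : ℂ)).re := by simp
        _ ≤ ‖z + (t : ℂ)‖ := Complex.re_le_norm _
    · have hsq : (‖z‖)^2 ≤ (‖z + (t : ℂ)‖)^2 := by
        rw [Complex.sq_norm, Complex.sq_norm, Complex.normSq_apply, Complex.normSq_apply]
        simp only [Complex.add_re, Complex.add_im, Complex.ofReal_re, Complex.ofReal_im,
          add_zero]
        nlinarith [hRe]
      nlinarith [norm_nonneg (z + (t:ℂ)), hb.le]
  have hmaxbound := rpow_mul_rpow_le_max t (‖z‖) α ht hb h0 h1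
  have hsum : t ^ ((1 - α)/2) * t ^ ((1 - α)/2) = t ^ (1 - α) := by
    rcases eq_or_lt_of_le h1 with rfl | hlt
    · norm_num
    · rw [← Real.rpow_add' ht (by intro h; nlinarith)]
      congr 1; ring
  set M := Real.exp (2 * |r|) * ‖w‖ ^ (-α) with hM
  have hMpos : 0 < M := by positivity
  have habspos : 0 < ‖w + Complex.exp (-θ) * (t:ℂ)‖ := by
    rw [hd]
    exact mul_pos (Real.exp_pos _) (lt_of_lt_of_le hb ((le_max_right _ _).trans hzt))
  have hbα : ‖z‖ = Real.exp r * ‖w‖ := by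
    rw [hz, norm_mul, Complex.norm_exp]
  have hwcancel : ‖w‖ ^ (-α) * ‖w‖ ^ α = 1 := by
    rw [← Real.rpow_add hbw]; simp
  have hone : (1:ℝ) ≤ M * Real.exp (-r) * (‖z‖) ^ α := by
    have e2 : M * Real.exp (-r) * (‖z‖) ^ α
        = Real.exp (2 * |r| + -r + r * α) * (‖w‖ ^ (-α) * ‖w‖ ^ α) := by
      rw [hM, hbα, Real.mul_rpow (Real.exp_pos r).le hbw.le, ← Real.exp_mul,
        Real.exp_add, Real.exp_add]
      ring
    rw [e2, hwcancel, mul_one]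
    refine Real.one_le_exp ?_
    nlinarith [le_abs_self r, neg_abs_le r, abs_nonneg r]
  have key : t ^ (1 - α) ≤ M * ‖w + Complex.exp (-θ) * (t:ℂ)‖ := by
    calc t ^ (1 - α) = t ^ (1 - α) * 1 := (mul_one _).symm
      _ ≤ t ^ (1 - α) * (M * Real.exp (-r) * ‖z‖ ^ α) :=
          mul_le_mul_of_nonneg_left hone (Real.rpow_nonneg ht _)
      _ = M * (Real.exp (-r) * (t ^ (1 - α) * ‖z‖ ^ α)) := by ring
      _ ≤ M * (Real.exp (-r) * ‖z + (t:ℂ)‖) := by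
          have h3 : t ^ (1 - α) * ‖z‖ ^ α ≤ ‖z + (t:ℂ)‖ :=
            le_trans hmaxbound hzt
          exact mul_le_mul_of_nonneg_left
            (mul_le_mul_of_nonneg_left h3 (Real.exp_pos _).le) hMpos.le
      _ = M * ‖w + Complex.exp (-θ) * (t:ℂ)‖ := by rw [hd]
  calc t ^ ((1 - α)/2) * (‖w + Complex.exp (-θ) * (t:ℂ)‖)⁻¹ * t ^ ((1 - α)/2)
      = t ^ (1 - α) / ‖w + Complex.exp (-θ) * (t:ℂ)‖ := by
        rw [← hsum]; ring
    _ ≤ M := (div_le_iff₀ habspos).mpr key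

/-- **Interpolated dilated resolvent bound.** Let `A` be a bounded
self-adjoint operator on a complex Hilbert space with nonnegative spectrum,
`θ, w ∈ ℂ` with `w ≠ 0` and `Re(e^θ w) ≥ 0`. Then for every `α ∈ [0,1]` and
every `φ`,
`|⟨A^{(1−α)/2} φ, (w·1 + e^{−θ}A)⁻¹ A^{(1−α)/2} φ⟩| ≤ e^{2|Re θ|} |w|^{−α} ‖φ‖²`,
where the fractional power `A^{(1−α)/2}` is defined by the continuous
functional calculus (`cfc`). -/
theorem interpolated_dilated_resolvent_bound
    {ℋ : Type*} [NormedAddCommGroup ℋ] [InnerProductSpace ℂ ℋ] [CompleteSpace ℋ]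
    (A : ℋ →L[ℂ] ℋ) (hA : IsSelfAdjoint A)
    (hspec : ∀ z ∈ spectrum ℂ A, ∃ t : ℝ, 0 ≤ t ∧ z = (t : ℂ))
    (θ w : ℂ) (hw : w ≠ 0) (hRe : 0 ≤ (Complex.exp θ * w).re)
    (α : ℝ) (hα : α ∈ Set.Icc (0 : ℝ) 1) (φ : ℋ) :
    ‖⟪cfc (fun t : ℝ => t ^ ((1 - α) / 2)) A φ,
          Ring.inverse (w • (1 : ℋ →L[ℂ] ℋ) + Complex.exp (-θ) • A)
            (cfc (fun t : ℝ => t ^ ((1 - α) / 2)) A φ)⟫_ℂ‖ ≤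
      Real.exp (2 * |θ.re|) * ‖w‖ ^ (-α) * ‖φ‖ ^ 2 := by

  obtain ⟨h0, h1⟩ := hα
  have hN : IsStarNormal A := hA.isStarNormal
  have hβ0 : (0:ℝ) ≤ (1 - α) / 2 := by linarith
  set F : ℂ → ℂ := fun x => ((x.re ^ ((1 - α) / 2) : ℝ) : ℂ) with hF
  have hFc : Continuous F :=
    Complex.continuous_ofReal.comp ((Real.continuous_rpow_const hβ0).comp Complex.continuous_re)
  have hBeq : cfc (fun t : ℝ => t ^ ((1 - α) / 2)) A = cfc F A :=
    cfc_real_eq_complex _ hA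
  set g : ℂ → ℂ := fun z => w + Complex.exp (-θ) * z with hg
  have hgc : Continuous g := continuous_const.add (continuous_const.mul continuous_id)
  have hne : ∀ x ∈ spectrum ℂ A, g x ≠ 0 := by
    intro x hx hzero
    obtain ⟨t, ht, rfl⟩ := hspec x hx
    have h2 : Complex.exp θ * w = -(t : ℂ) := by
      have h3 := congrArg (fun u => Complex.exp θ * u) hzero
      simp only [hg, mul_add, ← mul_assoc, ← Complex.exp_add, add_neg_cancel,
        Complex.exp_zero, one_mul, mul_zero] at h3
      linear_combination h3
    have h4 : (0:ℝ) ≤ -t := by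
      have := hRe; rw [h2] at this; simpa using this
    have ht0 : t = 0 := le_antisymm (by linarith) ht
    apply hw
    have := hzero
    rw [hg] at this
    simpa [ht0] using this
  have hgA : cfc g A = w • (1 : ℋ →L[ℂ] ℋ) + Complex.exp (-θ) • A := by
    rw [hg]
    rw [cfc_add A (fun _ => w) (fun z => Complex.exp (-θ) * z)
      continuous_const.continuousOn ((continuous_const.mul continuous_id).continuousOn),
      cfc_const w A hN, cfc_const_mul_id (Complex.exp (-θ)) A hN,
      Algebra.algebraMap_eq_smul_one]
  have hinv : Ring.inverse (w • (1 : ℋ →L[ℂ] ℋ) + Complex.exp (-θ) • A)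
      = cfc (fun z => (g z)⁻¹) A := by
    rw [← hgA, ← cfc_inv g A hne hgc.continuousOn hN]
  set B := cfc (fun t : ℝ => t ^ ((1 - α) / 2)) A with hB
  have hBsa : IsSelfAdjoint B := cfc_predicate _ A
  set C := cfc (fun z => (g z)⁻¹) A with hC
  have hginv : ContinuousOn (fun z => (g z)⁻¹) (spectrum ℂ A) :=
    hgc.continuousOn.inv₀ hne
  have hprod : B * C * B = cfc (fun z : ℂ => F z * (g z)⁻¹ * F z) A := by
    rw [hBeq, hC, ← cfc_mul F _ A hFc.continuousOn hginv,
      ← cfc_mul (fun x => F x * (g x)⁻¹) F A (hFc.continuousOn.mul hginv) hFc.continuousOn]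
  have hnorm : ‖B * C * B‖ ≤ Real.exp (2 * |θ.re|) * ‖w‖ ^ (-α) := by
    rw [hprod]
    apply norm_cfc_le (by positivity)
    intro x hx
    obtain ⟨t, ht, rfl⟩ := hspec x hx
    have := scalar_bound θ w hw hRe α t h0 h1 ht
    calc ‖F (t:ℂ) * (g (t:ℂ))⁻¹ * F (t:ℂ)‖
        = t ^ ((1 - α) / 2) * (‖w + Complex.exp (-θ) * (t:ℂ)‖)⁻¹
            * t ^ ((1 - α) / 2) := by
          simp only [hF, hg, Complex.ofReal_re, norm_mul, norm_inv, Complex.norm_real,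
            Real.norm_eq_abs]
          rw [abs_of_nonneg (Real.rpow_nonneg ht _)]
      _ ≤ _ := this
  have hBadj : ContinuousLinearMap.adjoint B = B :=
    (ContinuousLinearMap.isSelfAdjoint_iff').mp hBsa
  have hswap : ⟪B φ, C (B φ)⟫_ℂ = ⟪φ, (B * C * B) φ⟫_ℂ := by
    calc ⟪B φ, C (B φ)⟫_ℂ = ⟪ContinuousLinearMap.adjoint B φ, C (B φ)⟫_ℂ := by rw [hBadj]
      _ = ⟪φ, B (C (B φ))⟫_ℂ := ContinuousLinearMap.adjoint_inner_left _ _ _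
      _ = ⟪φ, (B * C * B) φ⟫_ℂ := rfl
  rw [hinv, hswap]
  calc ‖⟪φ, (B * C * B) φ⟫_ℂ‖ = ‖⟪φ, (B * C * B) φ⟫_ℂ‖ := rfl
    _ ≤ ‖φ‖ * ‖(B * C * B) φ‖ := norm_inner_le_norm _ _
    _ ≤ ‖φ‖ * (‖B * C * B‖ * ‖φ‖) :=
        mul_le_mul_of_nonneg_left ((B * C * B).le_opNorm φ) (norm_nonneg φ)
    _ ≤ ‖φ‖ * ((Real.exp (2 * |θ.re|) * ‖w‖ ^ (-α)) * ‖φ‖) := by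
        have := mul_le_mul_of_nonneg_right hnorm (norm_nonneg φ)
        exact mul_le_mul_of_nonneg_left this (norm_nonneg φ)
    _ = Real.exp (2 * |θ.re|) * ‖w‖ ^ (-α) * ‖φ‖ ^ 2 := by ring
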